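/- Let (U₁, V₁, A₁, φ₁) and (U₂, V₂, A₂, φ₂) be labeled bipartite digraphs. Let W be a finite set of natural numbers containing τ(d₋₁(u₁) + d₋₂(u₂)) and τ(d₊₁(u₁) + d₊₂(u₂)) for every u₁ ∈ U₁ and u₂ ∈ U₂. Define the polynomial-product digraph with parts U₁ × U₂ and W by declaring an arc from n ∈ W to (u₁, u₂) iff Nat.testBit (d₋₁(u₁) + d₋₂(u₂)) n = true, and an arc from (u₁, u₂) to n ∈ W iff Nat.testBit (d₊₁(u₁) + d₊₂(u₂)) n = true, and label W by the (injective) inclusion map W ↪ ℕ. Then the digraph polynomial of this product digraph equals p(A₁, φ₁) · p(A₂, φ₂). -/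

import Mathlib

/-- `dMinus Ain φ u = ∑_{v : Ain v u} 2 ^ (φ v)`. -/
noncomputable def dMinus {U V : Type*} [Fintype V]
    (Ain : V → U → Prop) (φ : V → ℕ) (u : U) : ℕ :=
  letI := Classical.dec
  ∑ v ∈ Finset.univ.filter (fun v => Ain v u), 2 ^ φ v

/-- `dPlus Aout φ u = ∑_{v : Aout u v} 2 ^ (φ v)`. -/
noncomputable def dPlus {U V : Type*} [Fintype V]
    (Aout : U → V → Prop) (φ : V → ℕ) (u : U) : ℕ :=
  letI := Classical.dec
  ∑ v ∈ Finset.univ.filter (fun v => Aout u v), 2 ^ φ v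

/-- The digraph polynomial `p(A, φ) = ∑_{u : U} X ^ (d₋ u) * Y ^ (d₊ u)` in `ℕ[X, Y]`,
realized as `MvPolynomial (Fin 2) ℕ` with `X = X 0` and `Y = X 1`. -/
noncomputable def digraphPoly {U V : Type*} [Fintype U] [Fintype V]
    (Ain : V → U → Prop) (Aout : U → V → Prop) (φ : V → ℕ) : MvPolynomial (Fin 2) ℕ :=
  ∑ u : U, MvPolynomial.X 0 ^ dMinus Ain φ u * MvPolynomial.X 1 ^ dPlus Aout φ u


lemma sum_testBit_range (m : ℕ) : ∀ k < 2 ^ m,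
    ∑ n ∈ Finset.range m, (k.testBit n).toNat * 2 ^ n = k := by
  induction m with
  | zero => intro k hk; interval_cases k; simp
  | succ m ih =>
    intro k hk
    rw [Finset.sum_range_succ']
    have h2 : k / 2 < 2 ^ m := by omega
    have hshift : ∀ n, k.testBit (n + 1) = (k / 2).testBit n := fun n => by
      simp [Nat.testBit_succ]
    simp only [hshift, pow_succ]
    have : ∑ n ∈ Finset.range m, ((k / 2).testBit n).toNat * (2 ^ n * 2)
        = (∑ n ∈ Finset.range m, ((k / 2).testBit n).toNat * 2 ^ n) * 2 := by
      rw [Finset.sum_mul]; ring_nf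
    rw [this, ih (k / 2) h2]
    simp only [Nat.testBit_zero, pow_zero, mul_one]
    rcases Nat.mod_two_eq_zero_or_one k with h | h <;> simp [h] <;> omega

lemma sum_testBit_filter (k : ℕ) (W : Finset ℕ)
    (h : ∀ n, k.testBit n = true → n ∈ W) :
    ∑ n ∈ W.filter (fun n => k.testBit n = true), 2 ^ n = k := by
  obtain ⟨m, hm⟩ : ∃ m, k < 2 ^ m := ⟨k, Nat.lt_two_pow_self⟩
  have hfe : W.filter (fun n => k.testBit n = true)
      = (Finset.range m).filter (fun n => k.testBit n = true) := by
    ext n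
    simp only [Finset.mem_filter, Finset.mem_range]
    constructor
    · rintro ⟨-, hp⟩
      refine ⟨?_, hp⟩
      by_contra hlt
      have : k.testBit n = false :=
        Nat.testBit_eq_false_of_lt (lt_of_lt_of_le hm
          (Nat.pow_le_pow_right (by norm_num) (by omega)))
      simp [this] at hp
    · rintro ⟨-, hp⟩; exact ⟨h n hp, hp⟩
  rw [hfe, Finset.sum_filter]
  conv_rhs => rw [← sum_testBit_range m k hm]
  apply Finset.sum_congr rfl
  intro n _; by_cases hb : k.testBit n <;> simp [hb]

lemma dsum_subtype (k : ℕ) (W : Finset ℕ)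
    (h : ∀ n, k.testBit n = true → n ∈ W) :
    (∑ v : W, if k.testBit (v : ℕ) = true then 2 ^ (v : ℕ) else 0) = k := by
  rw [Finset.sum_coe_sort W (fun n => if k.testBit n = true then 2 ^ n else 0)]
  rw [← Finset.sum_filter]
  exact sum_testBit_filter k W h

theorem digraphPoly_polynomialProduct {U₁ V₁ U₂ V₂ : Type*}
    [Fintype U₁] [Fintype V₁] [Fintype U₂] [Fintype V₂]
    (Ain₁ : V₁ → U₁ → Prop) (Aout₁ : U₁ → V₁ → Prop)
    (Ain₂ : V₂ → U₂ → Prop) (Aout₂ : U₂ → V₂ → Prop)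
    (φ₁ : V₁ → ℕ) (φ₂ : V₂ → ℕ)
    (hφ₁ : Function.Injective φ₁) (hφ₂ : Function.Injective φ₂)
    (W : Finset ℕ)
    (hW : ∀ (u₁ : U₁) (u₂ : U₂) (n : ℕ),
      (Nat.testBit (dMinus Ain₁ φ₁ u₁ + dMinus Ain₂ φ₂ u₂) n = true ∨
       Nat.testBit (dPlus Aout₁ φ₁ u₁ + dPlus Aout₂ φ₂ u₂) n = true) → n ∈ W) :
    digraphPoly
      (fun (n : W) (p : U₁ × U₂) =>
        Nat.testBit (dMinus Ain₁ φ₁ p.1 + dMinus Ain₂ φ₂ p.2) (n : ℕ) = true)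
      (fun (p : U₁ × U₂) (n : W) =>
        Nat.testBit (dPlus Aout₁ φ₁ p.1 + dPlus Aout₂ φ₂ p.2) (n : ℕ) = true)
      (fun n : W => (n : ℕ))
    = digraphPoly Ain₁ Aout₁ φ₁ * digraphPoly Ain₂ Aout₂ φ₂ := by
  simp only [digraphPoly]
  rw [Finset.sum_mul_sum, Fintype.sum_prod_type]
  apply Finset.sum_congr rfl
  intro u₁ _
  apply Finset.sum_congr rfl
  intro u₂ _
  have hm : dMinus (fun (n : W) (p : U₁ × U₂) =>
      Nat.testBit (dMinus Ain₁ φ₁ p.1 + dMinus Ain₂ φ₂ p.2) (n : ℕ) = true)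
      (fun n : W => (n : ℕ)) (u₁, u₂)
      = dMinus Ain₁ φ₁ u₁ + dMinus Ain₂ φ₂ u₂ := by
    rw [dMinus]
    rw [Finset.sum_filter]
    convert dsum_subtype _ W (fun n hn => hW u₁ u₂ n (Or.inl hn)) using 2 with a
    congr
  have hp : dPlus (fun (p : U₁ × U₂) (n : W) =>
      Nat.testBit (dPlus Aout₁ φ₁ p.1 + dPlus Aout₂ φ₂ p.2) (n : ℕ) = true)
      (fun n : W => (n : ℕ)) (u₁, u₂)
      = dPlus Aout₁ φ₁ u₁ + dPlus Aout₂ φ₂ u₂ := by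
    rw [dPlus]
    rw [Finset.sum_filter]
    convert dsum_subtype _ W (fun n hn => hW u₁ u₂ n (Or.inr hn)) using 2 with a
    congr
  rw [hm, hp, pow_add, pow_add]
  ring
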